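/- If G is a connected (C₄,P₄)-free graph of order n, then G has a vertex of degree n−1 (i.e., Δ(G) = n−1). -/
import Mathlib


open SimpleGraph

/-- A coloring of the vertices with colors `0, ..., k-1` which uses all `k` colors and such
that every pair of distinct colors appears on the endpoints of some edge. -/
def IsCompleteColoring {V : Type*} (G : SimpleGraph V) (c : V → ℕ) (k : ℕ) : Prop :=
  (∀ v, c v < k) ∧ (∀ i, i < k → ∃ v, c v = i) ∧
    ∀ i j, i < k → j < k → i ≠ j → ∃ u w, G.Adj u w ∧ c u = i ∧ c w = j

/-- A proper coloring: adjacent vertices get distinct colors. -/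
def IsProperColoring {V : Type*} (G : SimpleGraph V) (c : V → ℕ) : Prop :=
  ∀ u w, G.Adj u w → c u ≠ c w

/-- A Grundy coloring with `k` colors: proper, uses all `k` colors, and every vertex of
color `j` has, for each `i < j`, a neighbor colored `i`. -/
def IsGrundyColoring {V : Type*} (G : SimpleGraph V) (c : V → ℕ) (k : ℕ) : Prop :=
  (∀ v, c v < k) ∧ (∀ i, i < k → ∃ v, c v = i) ∧ IsProperColoring G c ∧
    ∀ v i, i < c v → ∃ u, G.Adj u v ∧ c u = i

/-- The pseudoachromatic number `ψ`. -/
noncomputable def pseudoachromaticNumber {V : Type*} (G : SimpleGraph V) : ℕ :=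
  sSup {k | ∃ c, IsCompleteColoring G c k}

/-- The achromatic number `α`. -/
noncomputable def achromaticNumber {V : Type*} (G : SimpleGraph V) : ℕ :=
  sSup {k | ∃ c, IsCompleteColoring G c k ∧ IsProperColoring G c}

/-- The Grundy number `Γ`. -/
noncomputable def grundyNumber {V : Type*} (G : SimpleGraph V) : ℕ :=
  sSup {k | ∃ c, IsGrundyColoring G c k}

/-- The chromatic number `χ` (as a natural number). -/
noncomputable def chromNumber {V : Type*} (G : SimpleGraph V) : ℕ :=
  sInf {k | ∃ c : V → ℕ, (∀ v, c v < k) ∧ IsProperColoring G c}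

/-- The clique number `ω`. -/
noncomputable def cliqueNumber {V : Type*} (G : SimpleGraph V) : ℕ :=
  sSup {n | ∃ s : Finset V, G.IsNClique n s}

/-- `G` is `H`-free: no induced subgraph of `G` is isomorphic to `H`. -/
def GraphFree {V W : Type*} (G : SimpleGraph V) (H : SimpleGraph W) : Prop :=
  ∀ s : Set V, IsEmpty ((G.induce s) ≃g H)

/-- `G` is `ωψ`-perfect. -/
def OmegaPsiPerfect {V : Type*} (G : SimpleGraph V) : Prop :=
  ∀ s : Set V, cliqueNumber (G.induce s) = pseudoachromaticNumber (G.induce s)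

/-- `G` is `χψ`-perfect. -/
def ChiPsiPerfect {V : Type*} (G : SimpleGraph V) : Prop :=
  ∀ s : Set V, chromNumber (G.induce s) = pseudoachromaticNumber (G.induce s)

/-- The path on 4 vertices. -/
def pathP4 : SimpleGraph (Fin 4) :=
  SimpleGraph.fromRel (fun a b => (b : ℕ) = (a : ℕ) + 1)

/-- The cycle on 4 vertices. -/
def cycleC4 : SimpleGraph (Fin 4) :=
  SimpleGraph.fromRel (fun a b => b = a + 1)

/-- The disjoint union of a path on 3 vertices and an edge. -/
def graphP3K2 : SimpleGraph (Fin 5) :=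
  SimpleGraph.fromRel (fun a b => (a, b) ∈ [((0 : Fin 5), (1 : Fin 5)), (1, 2), (3, 4)])

/-- The disjoint union of three edges. -/
def graph3K2 : SimpleGraph (Fin 6) :=
  SimpleGraph.fromRel (fun a b => (a, b) ∈ [((0 : Fin 6), (1 : Fin 6)), (2, 3), (4, 5)])

/-- The join of two graphs. -/
def graphJoin {V W : Type*} (G : SimpleGraph V) (H : SimpleGraph W) : SimpleGraph (V ⊕ W) :=
  SimpleGraph.fromRel (fun x y =>
    match x, y with
    | Sum.inl a, Sum.inl b => G.Adj a b
    | Sum.inr a, Sum.inr b => H.Adj a b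
    | _, _ => True)

/-- The disjoint union of two graphs. -/
def graphSum {V W : Type*} (G : SimpleGraph V) (H : SimpleGraph W) : SimpleGraph (V ⊕ W) :=
  SimpleGraph.fromRel (fun x y =>
    match x, y with
    | Sum.inl a, Sum.inl b => G.Adj a b
    | Sum.inr a, Sum.inr b => H.Adj a b
    | _, _ => False)

/-- The disjoint union of a family of graphs. -/
def graphSigma {ι : Type} {U : ι → Type} (f : ∀ i, SimpleGraph (U i)) :
    SimpleGraph (Σ i, U i) :=
  SimpleGraph.fromRel (fun x y => ∃ h : x.1 = y.1, (f y.1).Adj (h ▸ x.2) y.2)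

instance : DecidableRel cycleC4.Adj := fun a b =>
  decidable_of_iff _ (SimpleGraph.fromRel_adj (fun a b => b = a + 1) a b).symm

instance : DecidableRel pathP4.Adj := fun a b =>
  decidable_of_iff _ (SimpleGraph.fromRel_adj (fun a b : Fin 4 => (b : ℕ) = (a : ℕ) + 1) a b).symm

lemma walk_cross {V : Type*} (G : SimpleGraph V) (S : Set V) {a b : V} (p : G.Walk a b)
    (ha : a ∈ S) (hb : b ∉ S) : ∃ x y, x ∈ S ∧ y ∉ S ∧ G.Adj x y := by
  induction p with
  | nil => exact absurd ha hb
  | @cons u c d hadj q ih =>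
    by_cases hcS : c ∈ S
    · exact ih hcS hb
    · exact ⟨_, _, ha, hcS, hadj⟩

lemma not_free_of_embed {V : Type*} (G : SimpleGraph V) (H : SimpleGraph (Fin 4))
    (f : Fin 4 → V) (hf : Function.Injective f)
    (h : ∀ i j, G.Adj (f i) (f j) ↔ H.Adj i j) : ¬ GraphFree G H := by
  intro hfree
  refine (hfree (Set.range f)).false ?_
  refine ⟨(Equiv.ofInjective f hf).symm, ?_⟩
  intro a b
  have ha : f ((Equiv.ofInjective f hf).symm a) = (a : V) := by
    have := (Equiv.ofInjective f hf).apply_symm_apply a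
    exact congrArg Subtype.val this
  have hb : f ((Equiv.ofInjective f hf).symm b) = (b : V) := by
    have := (Equiv.ofInjective f hf).apply_symm_apply b
    exact congrArg Subtype.val this
  rw [← h, ha, hb]
  rfl

theorem stmt_6 {V : Type*} [Fintype V] (G : SimpleGraph V) [DecidableRel G.Adj]
    (hc : G.Connected) (hC4 : GraphFree G cycleC4) (hP4 : GraphFree G pathP4) :
    ∃ v : V, G.degree v = Fintype.card V - 1 := by
  classical
  haveI hne : Nonempty V := hc.nonempty
  obtain ⟨v, -, hv⟩ := Finset.univ.exists_max_image (fun w => G.degree w) Finset.univ_nonempty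
  refine ⟨v, ?_⟩
  have hall : ∀ w, w ≠ v → G.Adj v w := by
    by_contra hcon
    push_neg at hcon
    obtain ⟨w0, hw0ne, hw0nadj⟩ := hcon
    set S : Set V := {z | z = v ∨ G.Adj v z} with hS
    obtain ⟨x, y, hxS, hyS, hxy⟩ := walk_cross G S ((hc.preconnected v w0).some)
      (Or.inl rfl) (by simp only [hS, Set.mem_setOf_eq, not_or]; exact ⟨hw0ne, hw0nadj⟩)
    simp only [hS, Set.mem_setOf_eq, not_or] at hxS hyS
    obtain ⟨hyv, hvy⟩ := hyS
    have hvx : G.Adj v x := by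
      rcases hxS with rfl | h
      · exact absurd hxy hvy
      · exact h
    have hxv : x ≠ v := hvx.ne'
    have hxyne : x ≠ y := hxy.ne
    -- seek z adjacent to v, not x, not adjacent to x
    by_cases hz : ∃ z, G.Adj v z ∧ z ≠ x ∧ ¬ G.Adj x z
    · obtain ⟨z, hz1, hz2, hz3⟩ := hz
      have hzv : z ≠ v := hz1.ne'
      have hzy : z ≠ y := by rintro rfl; exact hvy hz1
      have hinj : Function.Injective ![z, v, x, y] := by
        intro i j hij
        fin_cases i <;> fin_cases j <;> simp_all <;>
          first
          | rfl
          | (exfalso; first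
              | exact hzv hij | exact hzv hij.symm
              | exact hz2 hij | exact hz2 hij.symm
              | exact hzy hij | exact hzy hij.symm
              | exact hxv hij | exact hxv hij.symm
              | exact hyv hij | exact hyv hij.symm
              | exact hxyne hij | exact hxyne hij.symm)
      have hzv' : G.Adj z v := hz1.symm
      have hvx' : G.Adj x v := hvx.symm
      have hxz' : ¬ G.Adj z x := fun h => hz3 h.symm
      have hyx : G.Adj y x := hxy.symm
      have hvy' : ¬ G.Adj y v := fun h => hvy h.symm
      by_cases hzw : G.Adj z y
      · -- C4: z-v-x-y-z
        have hzw' : G.Adj y z := hzw.symm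
        refine absurd hC4 (not_free_of_embed G cycleC4 ![z, v, x, y] hinj ?_)
        intro i j
        fin_cases i <;> fin_cases j <;>
          first
          | exact iff_of_false (G.irrefl) (by decide)
          | exact iff_of_true (by assumption) (by decide)
          | exact iff_of_false (by assumption) (by decide)
      · -- P4: z-v-x-y
        have hzw'' : ¬ G.Adj y z := fun h => hzw h.symm
        refine absurd hP4 (not_free_of_embed G pathP4 ![z, v, x, y] hinj ?_)
        intro i j
        fin_cases i <;> fin_cases j <;>
          first
          | exact iff_of_false (G.irrefl) (by decide)
          | exact iff_of_true (by assumption) (by decide)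
          | exact iff_of_false (by assumption) (by decide)
    · push_neg at hz
      have hsub : (G.neighborFinset v).erase x ⊆ ((G.neighborFinset x).erase v).erase y := by
        intro z hzmem
        rw [Finset.mem_erase, SimpleGraph.mem_neighborFinset] at hzmem
        obtain ⟨hznx, hzadj⟩ := hzmem
        have hxz : G.Adj x z := hz z hzadj hznx
        rw [Finset.mem_erase, Finset.mem_erase, SimpleGraph.mem_neighborFinset]
        refine ⟨?_, hzadj.ne', hxz⟩
        rintro rfl
        exact hvy hzadj
      have h1 : ((G.neighborFinset v).erase x).card = G.degree v - 1 := by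
        rw [Finset.card_erase_of_mem (by rwa [SimpleGraph.mem_neighborFinset]),
          SimpleGraph.card_neighborFinset_eq_degree]
      have h2 : (((G.neighborFinset x).erase v).erase y).card = G.degree x - 2 := by
        rw [Finset.card_erase_of_mem, Finset.card_erase_of_mem
          (by rw [SimpleGraph.mem_neighborFinset]; exact hvx.symm),
          SimpleGraph.card_neighborFinset_eq_degree]
        · omega
        · rw [Finset.mem_erase, SimpleGraph.mem_neighborFinset]
          exact ⟨hyv, hxy⟩
      have hcards := Finset.card_le_card hsub
      rw [h1, h2] at hcards
      have hdvx : G.degree x ≤ G.degree v := hv x (Finset.mem_univ x)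
      have hd2 : 2 ≤ G.degree x := by
        have : ({v, y} : Finset V) ⊆ G.neighborFinset x := by
          intro t ht
          rw [Finset.mem_insert, Finset.mem_singleton] at ht
          rw [SimpleGraph.mem_neighborFinset]
          rcases ht with rfl | rfl
          · exact hvx.symm
          · exact hxy
        have := Finset.card_le_card this
        rwa [Finset.card_insert_of_notMem (by simpa using Ne.symm hyv),
          Finset.card_singleton, SimpleGraph.card_neighborFinset_eq_degree] at this
      have hd1 : 1 ≤ G.degree v := by
        have : x ∈ G.neighborFinset v := by rwa [SimpleGraph.mem_neighborFinset]
        have := Finset.card_pos.mpr ⟨x, this⟩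
        rwa [SimpleGraph.card_neighborFinset_eq_degree] at this
      omega
  have : G.neighborFinset v = Finset.univ.erase v := by
    ext z
    simp only [SimpleGraph.mem_neighborFinset, Finset.mem_erase, Finset.mem_univ, and_true]
    constructor
    · exact fun h => h.ne'
    · exact fun h => hall z h
  rw [← SimpleGraph.card_neighborFinset_eq_degree, this,
    Finset.card_erase_of_mem (Finset.mem_univ v), Finset.card_univ]
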